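/- Let Ξ ⊆ A^{ℤ²} be a subshift whose shift action is minimal and uniquely ergodic, and suppose Ξ admits a vertical shear. If λ = (λ₁, λ₂) ∈ ℝ² is a topological eigenvalue of the shift action on Ξ, then λ₂ ∈ ℤ. -/

import Mathlib

open MeasureTheory

/-- The shift `ℤ²`-action on the full shift `A^{ℤ²}`: `(φⁿ u)(m) = u(m+n)`. -/
def shift2 {A : Type*} (n : ℤ × ℤ) (u : ℤ × ℤ → A) : ℤ × ℤ → A := fun m => u (m + n)

section Defs

variable {A : Type*} [TopologicalSpace A]

/-- A subshift: a nonempty, closed, shift-invariant subset of the full shift. -/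
def IsSubshift (Ξ : Set (ℤ × ℤ → A)) : Prop :=
  Ξ.Nonempty ∧ IsClosed Ξ ∧ ∀ (n : ℤ × ℤ), ∀ u ∈ Ξ, shift2 n u ∈ Ξ

/-- Minimality: every orbit is dense in the subshift. -/
def IsMinimalSubshift (Ξ : Set (ℤ × ℤ → A)) : Prop :=
  ∀ u ∈ Ξ, Ξ ⊆ closure {v | ∃ n : ℤ × ℤ, v = shift2 n u}

/-- Freeness: the shift action is free on the subshift. -/
def IsFreeSubshift (Ξ : Set (ℤ × ℤ → A)) : Prop :=
  ∀ u ∈ Ξ, ∀ n : ℤ × ℤ, shift2 n u = u → n = 0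

/-- A continuous `ℤ`-valued cocycle on the subshift `Ξ`: continuous in the first
variable, and satisfying `θ(u, n+m) = θ(u, n) + θ(φⁿ u, m)` on `Ξ`. -/
def IsContinuousCocycle (Ξ : Set (ℤ × ℤ → A)) (θ : (ℤ × ℤ → A) → ℤ × ℤ → ℤ) : Prop :=
  (∀ n : ℤ × ℤ, ContinuousOn (fun u => θ u n) Ξ) ∧
  (∀ u ∈ Ξ, ∀ n m : ℤ × ℤ, θ u (n + m) = θ u n + θ (shift2 n u) m)

variable [MeasurableSpace A]

/-- A shift-invariant Borel probability measure on the subshift `Ξ`, encoded as a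
probability measure on the full shift giving `Ξ` full measure. -/
def IsInvariantProb (Ξ : Set (ℤ × ℤ → A)) (μ : Measure (ℤ × ℤ → A)) : Prop :=
  IsProbabilityMeasure μ ∧ μ Ξᶜ = 0 ∧ ∀ n : ℤ × ℤ, μ.map (shift2 n) = μ

end Defs

/-- Horizontal shear: there are `u ∈ Ξ` and `N, N' : ℤ` such that for every `n : ℤ`
there is `v ∈ Ξ` agreeing with `u` on `ℤ × N₊` and with `φ^{(n,0)} u` on `ℤ × N'₋`. -/
def AdmitsHorizontalShear {A : Type*} [TopologicalSpace A] (Ξ : Set (ℤ × ℤ → A)) : Prop :=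
  ∃ u ∈ Ξ, ∃ N N' : ℤ, ∀ n : ℤ, ∃ v ∈ Ξ,
    (∀ m : ℤ × ℤ, N < m.2 → v m = u m) ∧
    (∀ m : ℤ × ℤ, m.2 < N' → v m = shift2 (n, 0) u m)

/-- Vertical shear: there are `u ∈ Ξ` and `N, N' : ℤ` such that for every `n : ℤ`
there is `v ∈ Ξ` agreeing with `u` on `N₊ × ℤ` and with `φ^{(0,n)} u` on `N'₋ × ℤ`. -/
def AdmitsVerticalShear {A : Type*} [TopologicalSpace A] (Ξ : Set (ℤ × ℤ → A)) : Prop :=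
  ∃ u ∈ Ξ, ∃ N N' : ℤ, ∀ n : ℤ, ∃ v ∈ Ξ,
    (∀ m : ℤ × ℤ, N < m.1 → v m = u m) ∧
    (∀ m : ℤ × ℤ, m.1 < N' → v m = shift2 (0, n) u m)

/-- `λ = (λ₁, λ₂) ∈ ℝ²` is a topological eigenvalue of the shift action on `Ξ`:
there is a continuous `ψ : Ξ → ℂ` of modulus one with
`ψ(φⁿ u) = exp(2πi (λ₁ n₁ + λ₂ n₂)) ψ(u)`. -/
def IsTopologicalEigenvalue {A : Type*} [TopologicalSpace A] (Ξ : Set (ℤ × ℤ → A))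
    (lam : ℝ × ℝ) : Prop :=
  ∃ ψ : (ℤ × ℤ → A) → ℂ, ContinuousOn ψ Ξ ∧ (∀ u ∈ Ξ, ‖ψ u‖ = 1) ∧
    ∀ u ∈ Ξ, ∀ n : ℤ × ℤ,
      ψ (shift2 n u) =
        Complex.exp (2 * Real.pi * Complex.I *
          ((lam.1 * (n.1 : ℝ) + lam.2 * (n.2 : ℝ) : ℝ) : ℂ)) * ψ u

open Filter in

lemma key_lemma {A : Type} [Fintype A] [TopologicalSpace A] [DiscreteTopology A]
    (Ξ : Set (ℤ × ℤ → A)) (hΞ : IsClosed Ξ)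
    (ψ : (ℤ × ℤ → A) → ℂ) (hψ : ContinuousOn ψ Ξ)
    (x y : ℕ → ℤ × ℤ → A) (hx : ∀ k, x k ∈ Ξ) (hy : ∀ k, y k ∈ Ξ)
    (hagree : ∀ m : ℤ × ℤ, ∀ᶠ k in atTop, x k m = y k m)
    (c : ℝ) (hcc : ∀ k, ‖ψ (x k) - ψ (y k)‖ = c) :
    c = 0 := by
  by_contra hc
  have hc0 : 0 < c := lt_of_le_of_ne (by rw [← hcc 0]; exact norm_nonneg _) (Ne.symm hc)
  set g : (ℤ × ℤ → A) × (ℤ × ℤ → A) → ℂ := fun p => ψ p.1 - ψ p.2 with hg_def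
  have hg : ContinuousOn g (Ξ ×ˢ Ξ) :=
    (hψ.comp continuousOn_fst fun p hp => hp.1).sub
      (hψ.comp continuousOn_snd fun p hp => hp.2)
  set K := (Ξ ×ˢ Ξ) ∩ g ⁻¹' {z | c ≤ ‖z‖} with hK_def
  have hKc : IsClosed K :=
    hg.preimage_isClosed_of_isClosed (hΞ.prod hΞ)
      (isClosed_le continuous_const continuous_norm)
  have hKcomp : IsCompact K := hKc.isCompact
  have hfK : ∀ k, (x k, y k) ∈ K := fun k => ⟨⟨hx k, hy k⟩, (hcc k).ge⟩
  have hle : Filter.map (fun k => (x k, y k)) atTop ≤ Filter.principal K :=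
    le_principal_iff.mpr (mem_map.mpr (Filter.Eventually.of_forall hfK))
  obtain ⟨p, hpK, hp⟩ := hKcomp.exists_clusterPt hle
  have hp' : MapClusterPt p atTop (fun k => (x k, y k)) := hp
  have hdiag : p.1 = p.2 := by
    funext m
    by_contra hne
    have hUopen : IsOpen {q : (ℤ × ℤ → A) × (ℤ × ℤ → A) | q.1 m = p.1 m ∧ q.2 m = p.2 m} := by
      have h1 : Continuous fun q : (ℤ × ℤ → A) × (ℤ × ℤ → A) => (q.1 m, q.2 m) :=
        ((continuous_apply m).comp continuous_fst).prodMk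
          ((continuous_apply m).comp continuous_snd)
      have := (isOpen_discrete ({(p.1 m, p.2 m)} : Set (A × A))).preimage h1
      convert this using 1
      ext q
      simp [Prod.ext_iff]
    have hU : {q : (ℤ × ℤ → A) × (ℤ × ℤ → A) | q.1 m = p.1 m ∧ q.2 m = p.2 m} ∈ nhds p :=
      hUopen.mem_nhds ⟨rfl, rfl⟩
    have hfreq : ∃ᶠ k in atTop, (x k, y k) ∈
        {q : (ℤ × ℤ → A) × (ℤ × ℤ → A) | q.1 m = p.1 m ∧ q.2 m = p.2 m} :=
      mapClusterPt_iff_frequently.mp hp' _ hU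
    obtain ⟨k, hk1, hk2⟩ := (hfreq.and_eventually (hagree m)).exists
    exact hne (hk1.1.symm.trans (hk2.trans hk1.2))
  have hzero : g p = 0 := by simp [hg_def, hdiag]
  have := hpK.2
  rw [Set.mem_preimage, hzero] at this
  simp at this
  linarith


lemma abs_exp_two_pi_I (r : ℝ) :
    ‖Complex.exp (2 * Real.pi * Complex.I * (r : ℂ))‖ = 1 := by
  rw [Complex.norm_exp]
  have : (2 * Real.pi * Complex.I * (r : ℂ)).re = 0 := by
    simp [Complex.mul_re, Complex.mul_im]
  rw [this, Real.exp_zero]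

lemma exp_two_pi_add (r s : ℝ) :
    Complex.exp (2 * Real.pi * Complex.I * ((r + s : ℝ) : ℂ)) =
      Complex.exp (2 * Real.pi * Complex.I * (r : ℂ)) *
        Complex.exp (2 * Real.pi * Complex.I * (s : ℂ)) := by
  rw [← Complex.exp_add]
  push_cast
  ring_nf

/-- In a minimal, uniquely ergodic `ℤ²` subshift admitting a vertical shear, the second
component of every topological eigenvalue is an integer. -/
theorem statement5 {A : Type} [Fintype A] [Nonempty A]
    [TopologicalSpace A] [DiscreteTopology A] [MeasurableSpace A] [BorelSpace A]
    (Ξ : Set (ℤ × ℤ → A)) (hsub : IsSubshift Ξ) (hmin : IsMinimalSubshift Ξ)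
    (huerg : ∃! μ : Measure (ℤ × ℤ → A), IsInvariantProb Ξ μ)
    (hshear : AdmitsVerticalShear Ξ)
    (lam : ℝ × ℝ) (heig : IsTopologicalEigenvalue Ξ lam) :
    ∃ k : ℤ, lam.2 = (k : ℝ) := by
  obtain ⟨ψ, hψc, hψ1, hψe⟩ := heig
  obtain ⟨u, hu, N, N', hsh⟩ := hshear
  obtain ⟨v, hv, hR, hL⟩ := hsh 1
  have hΞcl := hsub.2.1
  have hinv := hsub.2.2
  -- Step A : ψ v = ψ u (shear looks like u far to the right)
  have hA : ψ v = ψ u := by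
    have h0 := key_lemma Ξ hΞcl ψ hψc
      (fun k : ℕ => shift2 ((k : ℤ), 0) v) (fun k : ℕ => shift2 ((k : ℤ), 0) u)
      (fun k => hinv _ _ hv) (fun k => hinv _ _ hu)
      (by
        intro m
        filter_upwards [Filter.eventually_ge_atTop ((N - m.1).toNat + 1)] with k hk
        show v (m + ((k : ℤ), 0)) = u (m + ((k : ℤ), 0))
        exact hR _ (by simp only [Prod.fst_add]; omega))
      ‖ψ v - ψ u‖
      (by
        intro k
        rw [hψe v hv ((k : ℤ), 0), hψe u hu ((k : ℤ), 0), ← mul_sub, norm_mul,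
          abs_exp_two_pi_I, one_mul])
    rwa [norm_eq_zero, sub_eq_zero] at h0
  -- Step B : ψ v = e(λ₂) ψ u (shear looks like φ^{(0,1)} u far to the left)
  have hB : ψ v = Complex.exp (2 * Real.pi * Complex.I * ((lam.2 : ℝ) : ℂ)) * ψ u := by
    have h0 := key_lemma Ξ hΞcl ψ hψc
      (fun k : ℕ => shift2 (-(k : ℤ), 0) v) (fun k : ℕ => shift2 (-(k : ℤ), 1) u)
      (fun k => hinv _ _ hv) (fun k => hinv _ _ hu)
      (by
        intro m
        filter_upwards [Filter.eventually_ge_atTop ((m.1 - N').toNat + 1)] with k hk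
        show v (m + (-(k : ℤ), 0)) = u (m + (-(k : ℤ), 1))
        rw [hL (m + (-(k : ℤ), 0)) (by simp only [Prod.fst_add]; omega)]
        show u (m + (-(k : ℤ), 0) + (0, 1)) = u (m + (-(k : ℤ), 1))
        congr 1
        simp [Prod.ext_iff])
      ‖ψ v - Complex.exp (2 * Real.pi * Complex.I * ((lam.2 : ℝ) : ℂ)) * ψ u‖
      (by
        intro k
        rw [hψe v hv (-(k : ℤ), 0), hψe u hu (-(k : ℤ), 1)]
        have hsplit : Complex.exp (2 * Real.pi * Complex.I *
              ((lam.1 * ((((-(k : ℤ), (1 : ℤ)) : ℤ × ℤ).1 : ℤ) : ℝ) +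
                lam.2 * ((((-(k : ℤ), (1 : ℤ)) : ℤ × ℤ).2 : ℤ) : ℝ) : ℝ) : ℂ)) =
            Complex.exp (2 * Real.pi * Complex.I *
              ((lam.1 * ((((-(k : ℤ), (0 : ℤ)) : ℤ × ℤ).1 : ℤ) : ℝ) +
                lam.2 * ((((-(k : ℤ), (0 : ℤ)) : ℤ × ℤ).2 : ℤ) : ℝ) : ℝ) : ℂ)) *
            Complex.exp (2 * Real.pi * Complex.I * ((lam.2 : ℝ) : ℂ)) := by
          rw [← Complex.exp_add]; push_cast; ring_nf
        rw [hsplit, mul_assoc _ _ (ψ u), ← mul_sub, norm_mul, abs_exp_two_pi_I, one_mul])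
    rwa [norm_eq_zero, sub_eq_zero] at h0
  -- combine
  have hne : ψ u ≠ 0 := fun h => by simpa [h] using hψ1 u hu
  have hE : Complex.exp (2 * Real.pi * Complex.I * ((lam.2 : ℝ) : ℂ)) = 1 :=
    mul_right_cancel₀ hne (by rw [one_mul]; exact hB.symm.trans hA)
  rw [Complex.exp_eq_one_iff] at hE
  obtain ⟨n, hn⟩ := hE
  refine ⟨n, ?_⟩
  have h2πI : (2 * (Real.pi : ℂ) * Complex.I : ℂ) ≠ 0 :=
    mul_ne_zero (mul_ne_zero two_ne_zero (Complex.ofReal_ne_zero.mpr Real.pi_ne_zero))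
      Complex.I_ne_zero
  have hfin : ((lam.2 : ℝ) : ℂ) = (n : ℂ) := mul_left_cancel₀ h2πI (by rw [hn]; ring)
  exact_mod_cast hfin
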